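/- Let $G$ be a countable group and $(B_r)_{r\ge 1}$ an increasing sequence of finite symmetric subsets of $G$ with $\bigcap_r B_r=\{e\}$, and suppose $(B_r)$ does not satisfy the Besicovitch covering property with constant $C$ for any $C\in\mathbb{N}$. Then for every $M>0$ there exist $t>0$ and finite nonempty sets $U,V\subseteq G$ such that $|V|>\frac{M}{t}|U|$ and for every $x\in V$ there is an $n$ with $|U\cap B_n x|>t\,|V\cap B_n x|$. (Consequently, for the action of $G$ on itself by left translation with counting measure, taking $f=1_U$ and $h=1_V$ one gets $\mu_h\{x:\sup_n R_n(f,h)(x)>t\}=|V|>\frac{M}{t}\int f$, so the ratio maximal inequality fails for this action.) -/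

import Mathlib

/-- The sequence `(B_r)` of finite subsets of a group `G` satisfies the Besicovitch
covering property with constant `C` if: whenever `E ⊆ G` is finite and to each `g ∈ E` a
translate `B_{n(g)}·g` is assigned, some subfamily of these translates covers `E` while
no element of `G` lies in more than `C` of the chosen translates. -/
def BesicovitchCovering {G : Type*} [Group G] (B : ℕ → Finset G) (C : ℕ) : Prop :=
  ∀ (E : Finset G) (n : G → ℕ), ∃ S : Finset G, S ⊆ E ∧
    (∀ x ∈ E, ∃ g ∈ S, x * g⁻¹ ∈ B (n g)) ∧
    ∀ x : G, Set.ncard {g : G | g ∈ S ∧ x * g⁻¹ ∈ B (n g)} ≤ C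

open Classical in
/-- Greedy (Vitali-type) selection along a list. -/
noncomputable def greedyL {G : Type} [Group G] (B : ℕ → Finset G) (n : G → ℕ) :
    List G → List G
  | [] => []
  | g :: l =>
      let S := greedyL B n l
      if ∀ g' ∈ S, g * g'⁻¹ ∉ B (n g') then g :: S else S

lemma greedyL_subset {G : Type} [Group G] (B : ℕ → Finset G) (n : G → ℕ) :
    ∀ l : List G, ∀ g ∈ greedyL B n l, g ∈ l := by
  intro l
  induction l with
  | nil => simp [greedyL]
  | cons a l ih =>
      intro g hg
      rw [greedyL] at hg
      split at hg
      · rcases List.mem_cons.1 hg with h | h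
        · simp [h]
        · exact List.mem_cons_of_mem _ (ih g h)
      · exact List.mem_cons_of_mem _ (ih g hg)

lemma greedyL_cover {G : Type} [Group G] (B : ℕ → Finset G) (n : G → ℕ)
    (hone : ∀ m : ℕ, (1 : G) ∈ B m) :
    ∀ l : List G, ∀ g ∈ l, ∃ g' ∈ greedyL B n l, g * g'⁻¹ ∈ B (n g') := by
  intro l
  induction l with
  | nil => simp
  | cons a l ih =>
      intro g hg
      rw [greedyL]
      rcases List.mem_cons.1 hg with h | h
      · subst h
        split
        next hcond =>
          by_cases hc : ∀ g' ∈ greedyL B n l, g * g'⁻¹ ∉ B (n g')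
          · exact ⟨g, List.mem_cons_self, by simpa using hone (n g)⟩
          · push_neg at hc
            obtain ⟨g', hg', hmem⟩ := hc
            exact ⟨g', List.mem_cons_of_mem _ hg', hmem⟩
        next hcond =>
          push_neg at hcond
          obtain ⟨g', hg', hmem⟩ := hcond
          exact ⟨g', hg', hmem⟩
      · obtain ⟨g', hg', hmem⟩ := ih g h
        split
        · exact ⟨g', List.mem_cons_of_mem _ hg', hmem⟩
        · exact ⟨g', hg', hmem⟩

lemma greedyL_pairwise {G : Type} [Group G] (B : ℕ → Finset G) (n : G → ℕ)
    (hmono : Monotone B) :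
    ∀ l : List G, l.Pairwise (fun a b => n a ≤ n b) →
      (greedyL B n l).Pairwise
        (fun a b => a * b⁻¹ ∉ B (n a) ∧ a * b⁻¹ ∉ B (n b)) := by
  intro l
  induction l with
  | nil => simp [greedyL]
  | cons a l ih =>
      intro hp
      rw [greedyL]
      have hp' := hp.of_cons
      have hle : ∀ b ∈ l, n a ≤ n b := fun b hb => (List.pairwise_cons.1 hp).1 b hb
      split
      next hcond =>
        refine List.pairwise_cons.2 ⟨?_, ih hp'⟩
        intro b hb
        have hble : n a ≤ n b := hle b (greedyL_subset B n l b hb)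
        have h1 : a * b⁻¹ ∉ B (n b) := hcond b hb
        exact ⟨fun h => h1 (hmono hble h), h1⟩
      next => exact ih hp'

theorem translation_action_maximal_fails {G : Type} [Group G] [Countable G]
    (B : ℕ → Finset G)
    (hmono : Monotone B)
    (hsym : ∀ r : ℕ, ∀ g ∈ B r, g⁻¹ ∈ B r)
    (hint : ⋂ r : ℕ, (B r : Set G) = {1})
    (hnotbes : ∀ C : ℕ, ¬ BesicovitchCovering B C) :
    ∀ M : ℝ, 0 < M →
      ∃ t : ℝ, 0 < t ∧
        ∃ U V : Finset G, U.Nonempty ∧ V.Nonempty ∧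
          (M / t) * (U.card : ℝ) < (V.card : ℝ) ∧
          ∀ x ∈ V, ∃ n : ℕ,
            t * (Set.ncard {g : G | g ∈ V ∧ g * x⁻¹ ∈ B n} : ℝ) <
              (Set.ncard {g : G | g ∈ U ∧ g * x⁻¹ ∈ B n} : ℝ) := by
  classical
  intro M hM
  -- `1` lies in every ball
  have hone : ∀ m : ℕ, (1 : G) ∈ B m := by
    intro m
    have : (1 : G) ∈ ⋂ r : ℕ, (B r : Set G) := by rw [hint]; exact rfl
    simpa using Set.mem_iInter.1 this m
  set C : ℕ := ⌈2 * M⌉₊ with hC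
  have hCM : 2 * M ≤ (C : ℝ) := Nat.le_ceil _
  -- failure at constant `C`
  have hfail := hnotbes C
  rw [BesicovitchCovering] at hfail
  push_neg at hfail
  obtain ⟨E, nf, hEnf⟩ := hfail
  -- sort `E` by increasing radius and run the greedy selection
  set l : List G := E.toList.mergeSort (fun a b => decide (nf a ≤ nf b)) with hl
  have hmeml : ∀ g : G, g ∈ l ↔ g ∈ E := by
    intro g
    rw [hl, List.mem_mergeSort, Finset.mem_toList]
  have hsorted : l.Pairwise (fun a b => nf a ≤ nf b) := by
    have := List.pairwise_mergeSort (le := fun a b => decide (nf a ≤ nf b))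
      (fun a b c hab hbc => by
        simp only [decide_eq_true_eq] at *; omega)
      (fun a b => by simp only [Bool.or_eq_true, decide_eq_true_eq]; omega)
      E.toList
    rw [← hl] at this
    exact this.imp (fun h => by simpa using h)
  set Sl : List G := greedyL B nf l with hSl
  set S : Finset G := Sl.toFinset with hS
  have hSmem : ∀ g : G, g ∈ S ↔ g ∈ Sl := by
    intro g; rw [hS, List.mem_toFinset]
  have hSsub : S ⊆ E := by
    intro g hg
    exact (hmeml g).1 (greedyL_subset B nf l g ((hSmem g).1 hg))
  have hScover : ∀ x ∈ E, ∃ g ∈ S, x * g⁻¹ ∈ B (nf g) := by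
    intro x hx
    obtain ⟨g, hg, hmem⟩ := greedyL_cover B nf hone l x ((hmeml x).2 hx)
    exact ⟨g, (hSmem g).2 hg, hmem⟩
  -- separation property of the greedy selection
  have hpw := greedyL_pairwise B nf hmono l hsorted
  have hsep : ∀ a ∈ S, ∀ b ∈ S, a ≠ b → a * b⁻¹ ∉ B (nf b) := by
    intro a ha b hb hab
    have hsymm : Symmetric (fun a b : G => a * b⁻¹ ∉ B (nf a) ∧ a * b⁻¹ ∉ B (nf b)) := by
      intro x y hxy
      constructor
      · intro h
        exact hxy.2 (by simpa using hsym _ _ h)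
      · intro h
        exact hxy.1 (by simpa using hsym _ _ h)
    haveI : Std.Symm (fun a b : G => a * b⁻¹ ∉ B (nf a) ∧ a * b⁻¹ ∉ B (nf b)) := ⟨hsymm⟩
    exact (hpw.forall ((hSmem a).1 ha) ((hSmem b).1 hb) hab).2
  -- high multiplicity point
  obtain ⟨x₀, hx₀⟩ := hEnf S hSsub hScover
  set V : Finset G := S.filter (fun g => x₀ * g⁻¹ ∈ B (nf g)) with hV
  have hsetV : {g : G | g ∈ S ∧ x₀ * g⁻¹ ∈ B (nf g)} = (V : Set G) := by
    ext g; simp [hV]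
  have hVcard : C < V.card := by
    have := hx₀
    rw [hsetV, Set.ncard_coe_finset] at this
    exact this
  have hVmem : ∀ g ∈ V, g ∈ S ∧ x₀ * g⁻¹ ∈ B (nf g) := by
    intro g hg
    rw [hV, Finset.mem_filter] at hg
    exact hg
  refine ⟨1/2, by norm_num, {x₀}, V, Finset.singleton_nonempty _, ?_, ?_, ?_⟩
  · rw [← Finset.card_pos]; omega
  · have h2M : M * 2 < (V.card : ℝ) := by
      calc M * 2 = 2 * M := by ring
        _ ≤ (C : ℝ) := hCM
        _ < (V.card : ℝ) := by exact_mod_cast hVcard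
    simpa using h2M
  · intro y hy
    obtain ⟨hyS, hyB⟩ := hVmem y hy
    refine ⟨nf y, ?_⟩
    have hU : {g : G | g ∈ ({x₀} : Finset G) ∧ g * y⁻¹ ∈ B (nf y)} = {x₀} := by
      ext g
      simp only [Set.mem_setOf_eq, Finset.mem_singleton, Set.mem_singleton_iff]
      constructor
      · exact fun h => h.1
      · rintro rfl
        exact ⟨rfl, hyB⟩
    have hVone : {g : G | g ∈ V ∧ g * y⁻¹ ∈ B (nf y)} = {y} := by
      ext g
      simp only [Set.mem_setOf_eq, Set.mem_singleton_iff]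
      constructor
      · rintro ⟨hgV, hgB⟩
        by_contra hne
        exact hsep g (hVmem g hgV).1 y hyS hne hgB
      · rintro rfl
        exact ⟨hy, by simpa using hone _⟩
    rw [hU, hVone, Set.ncard_singleton, Set.ncard_singleton]
    norm_num
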